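/- Let X be a Tychonoff space and let V(X) be the free topological vector space over X. Then the image i(X) of X under the canonical embedding i : X → V(X) is a closed subspace of V(X). -/

import Mathlib

open Topology Set

universe u v w

/-- `IsFreeTVS V i` says that the (real) topological vector space `V` together with the
continuous map `i : X → V` is the free topological vector space over `X`: every continuous
map from `X` to a topological vector space `E` extends uniquely to a continuous linear
operator `V →L[ℝ] E`. -/
def IsFreeTVS {X : Type u} [TopologicalSpace X] (V : Type v) [AddCommGroup V] [Module ℝ V]
    [TopologicalSpace V] [IsTopologicalAddGroup V] [ContinuousSMul ℝ V] (i : X → V) : Prop :=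
  Continuous i ∧
    ∀ (E : Type w) [AddCommGroup E] [Module ℝ E] [TopologicalSpace E]
      [IsTopologicalAddGroup E] [ContinuousSMul ℝ E] (f : X → E),
      Continuous f → ∃! g : V →L[ℝ] E, ∀ x, g (i x) = f x

/-- `SPn i n` is the set `SP_n(X) = {λ₁x₁ + ⋯ + λₙxₙ : λᵢ ∈ [−n,n], xᵢ ∈ X}` inside `V`. -/
def SPn {X : Type u} {V : Type v} [AddCommGroup V] [Module ℝ V]
    (i : X → V) (n : ℕ) : Set V :=
  {v | ∃ (c : Fin n → ℝ) (x : Fin n → X),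
    (∀ j, c j ∈ Set.Icc (-(n : ℝ)) (n : ℝ)) ∧ v = ∑ j, c j • i (x j)}

section Aux

/-- A type synonym putting the indiscrete topology on a module. -/
def TrivTop (α : Type*) : Type _ := α

instance {α : Type*} [AddCommGroup α] : AddCommGroup (TrivTop α) :=
  inferInstanceAs (AddCommGroup α)

instance {α : Type*} [AddCommGroup α] [Module ℝ α] : Module ℝ (TrivTop α) :=
  inferInstanceAs (Module ℝ α)

instance {α : Type*} : TopologicalSpace (TrivTop α) := ⊤

instance {α : Type*} [AddCommGroup α] : IsTopologicalAddGroup (TrivTop α) where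
  continuous_add := continuous_top
  continuous_neg := continuous_top

instance {α : Type*} [AddCommGroup α] [Module ℝ α] : ContinuousSMul ℝ (TrivTop α) where
  continuous_smul := continuous_top

variable {X : Type u} [TopologicalSpace X] {V : Type v} [AddCommGroup V] [Module ℝ V]
  [TopologicalSpace V] [IsTopologicalAddGroup V] [ContinuousSMul ℝ V]

/-- The range of `i` spans `V` algebraically, given the uniqueness part of the
universal property, applied with an indiscrete-topology target. -/
theorem span_range_eq_top_of_ext (i : X → V)
    (hext : ∀ (E : Type w) [AddCommGroup E] [Module ℝ E] [TopologicalSpace E]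
      [IsTopologicalAddGroup E] [ContinuousSMul ℝ E] (f : X → E),
      Continuous f → ∃! g : V →L[ℝ] E, ∀ x, g (i x) = f x) :
    Submodule.span ℝ (Set.range i) = ⊤ := by
  set S := Submodule.span ℝ (Set.range i) with hS
  by_contra hne
  obtain ⟨v₀, hv₀⟩ : ∃ v₀ : V, v₀ ∉ S := by
    by_contra h
    push_neg at h
    exact hne (Submodule.eq_top_iff'.mpr h)
  have hmkQ : S.mkQ v₀ ≠ 0 := by
    rw [Submodule.mkQ_apply, Ne, Submodule.Quotient.mk_eq_zero]
    exact hv₀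
  obtain ⟨φ, hφ⟩ : ∃ φ : Module.Dual ℝ (V ⧸ S), φ (S.mkQ v₀) ≠ 0 := by
    by_contra h
    push_neg at h
    exact hmkQ ((Module.forall_dual_apply_eq_zero_iff ℝ _).mp h)
  -- the functional κ vanishes on S (hence on range i) but not at v₀
  set κ : V →ₗ[ℝ] ℝ := φ.comp S.mkQ with hκ
  have hκ0 : ∀ x, κ (i x) = 0 := by
    intro x
    have : S.mkQ (i x) = 0 := by
      rw [Submodule.mkQ_apply, Submodule.Quotient.mk_eq_zero]
      exact Submodule.subset_span ⟨x, rfl⟩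
    simp [hκ, this]
  -- package κ as a continuous linear map into the indiscrete target
  set E := TrivTop (ULift.{w} ℝ) with hE
  let lup : ℝ →ₗ[ℝ] E := (ULift.moduleEquiv.symm : ℝ ≃ₗ[ℝ] ULift.{w} ℝ).toLinearMap
  let g₁ : V →L[ℝ] E := ⟨lup.comp κ, continuous_top⟩
  obtain ⟨g, hg, hguniq⟩ := hext E (fun _ => 0) continuous_top
  have h1 : g₁ = g := hguniq g₁ (fun x => by
    simp [g₁, hκ0 x])
  have h2 : (0 : V →L[ℝ] E) = g := hguniq 0 (fun x => rfl)
  have : g₁ v₀ = 0 := by rw [h1, ← h2]; rfl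
  apply hφ
  have := congrArg ULift.down this
  exact this
/-- Extension of continuous real-valued functions on `X` to continuous functionals on `V`. -/
theorem exists_functional_of_ext (i : X → V)
    (hext : ∀ (E : Type w) [AddCommGroup E] [Module ℝ E] [TopologicalSpace E]
      [IsTopologicalAddGroup E] [ContinuousSMul ℝ E] (f : X → E),
      Continuous f → ∃! g : V →L[ℝ] E, ∀ x, g (i x) = f x)
    (f : X → ℝ) (hf : Continuous f) :
    ∃ φ : V →L[ℝ] ℝ, ∀ x, φ (i x) = f x := by
  obtain ⟨g, hg, -⟩ := hext (ULift.{w} ℝ) (fun x => ULift.up (f x))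
    ((Homeomorph.ulift.symm.continuous).comp hf)
  refine ⟨(ContinuousLinearEquiv.ulift : ULift.{w} ℝ ≃L[ℝ] ℝ).toContinuousLinearMap.comp g,
    fun x => ?_⟩
  simp [hg x, ContinuousLinearEquiv.ulift]

end Aux

/-- If `X` is a Tychonoff space and `(V, i)` is the free topological vector
space over `X`, then the image `i(X)` of `X` is a closed subspace of `V`. -/
theorem isClosed_range_of_isFreeTVS
    {X : Type u} [TopologicalSpace X] [T35Space X]
    (V : Type v) [AddCommGroup V] [Module ℝ V] [TopologicalSpace V]
    [IsTopologicalAddGroup V] [ContinuousSMul ℝ V] (i : X → V)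
    (hV : IsFreeTVS V i) :
    IsClosed (Set.range i) := by
  classical
  obtain ⟨hi, hext⟩ := hV
  have hspan : Submodule.span ℝ (Set.range i) = ⊤ := span_range_eq_top_of_ext i hext
  have hfun : ∀ f : X → ℝ, Continuous f → ∃ φ : V →L[ℝ] ℝ, ∀ x, φ (i x) = f x :=
    fun f hf => exists_functional_of_ext i hext f hf
  -- take v in the closure of the range
  rw [← closure_subset_iff_isClosed]
  intro v hv
  -- v is a finite combination of elements of the range
  have hvs : v ∈ Submodule.span ℝ (Set.range i) := hspan ▸ Submodule.mem_top
  obtain ⟨c, hc⟩ := Finsupp.mem_span_range_iff_exists_finsupp.mp hvs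
  -- multiplicativity of evaluations at v
  have hmul : ∀ (f g : X → ℝ), Continuous f → Continuous g →
      (∑ x ∈ c.support, c x * (f x * g x)) = (∑ x ∈ c.support, c x * f x) *
        (∑ x ∈ c.support, c x * g x) := by
    intro f g hf hg
    obtain ⟨φf, hφf⟩ := hfun f hf
    obtain ⟨φg, hφg⟩ := hfun g hg
    obtain ⟨φfg, hφfg⟩ := hfun (fun x => f x * g x) (hf.mul hg)
    -- the continuous function φfg - φf * φg vanishes on range i, hence on its closure
    have key : ∀ w ∈ closure (Set.range i), φfg w = φf w * φg w := by
      have hclosed : IsClosed {w : V | φfg w = φf w * φg w} :=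
        isClosed_eq φfg.continuous (φf.continuous.mul φg.continuous)
      intro w hw
      refine closure_minimal ?_ hclosed hw
      rintro - ⟨x, rfl⟩
      simp [hφf, hφg, hφfg]
    have hv' := key v hv
    -- compute each side via linearity
    have e1 : φfg v = ∑ x ∈ c.support, c x * (f x * g x) := by
      rw [← hc, Finsupp.sum, map_sum]
      exact Finset.sum_congr rfl fun x _ => by simp [hφfg]
    have e2 : φf v = ∑ x ∈ c.support, c x * f x := by
      rw [← hc, Finsupp.sum, map_sum]
      exact Finset.sum_congr rfl fun x _ => by simp [hφf]
    have e3 : φg v = ∑ x ∈ c.support, c x * g x := by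
      rw [← hc, Finsupp.sum, map_sum]
      exact Finset.sum_congr rfl fun x _ => by simp [hφg]
    rw [← e1, ← e2, ← e3]; exact hv'
  -- sum of coefficients is 1
  have hsum : (∑ x ∈ c.support, c x) = 1 := by
    obtain ⟨φ, hφ⟩ := hfun (fun _ => 1) continuous_const
    have key : ∀ w ∈ closure (Set.range i), φ w = 1 := by
      have hclosed : IsClosed {w : V | φ w = 1} := isClosed_eq φ.continuous continuous_const
      intro w hw
      refine closure_minimal ?_ hclosed hw
      rintro - ⟨x, rfl⟩
      simp [hφ]
    have hv' := key v hv
    have e1 : φ v = ∑ x ∈ c.support, c x := by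
      rw [← hc, Finsupp.sum, map_sum]
      exact Finset.sum_congr rfl fun x _ => by simp [hφ]
    rw [← e1]; exact hv'
  -- For each x₀ in the support, pick a continuous function which is 1 at x₀ and 0 at
  -- the other points of the support.
  have hsep : ∀ x₀ ∈ c.support, ∃ f : X → ℝ, Continuous f ∧ f x₀ = 1 ∧
      ∀ y ∈ c.support, y ≠ x₀ → f y = 0 := by
    intro x₀ hx₀
    have hK : IsClosed ((c.support.erase x₀ : Finset X) : Set X) :=
      (Finset.finite_toSet _).isClosed
    have hx₀K : x₀ ∉ ((c.support.erase x₀ : Finset X) : Set X) := by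
      simp
    obtain ⟨f, hfc, hfx, hfK⟩ :=
      CompletelyRegularSpace.completely_regular x₀ _ hK hx₀K
    refine ⟨fun y => 1 - (f y : ℝ), (continuous_const.sub
      (continuous_subtype_val.comp hfc)), by simp [hfx], ?_⟩
    intro y hy hne
    have hmem : y ∈ ((c.support.erase x₀ : Finset X) : Set X) := by
      simp [Finset.mem_erase, hne, hy]
    have : f y = 1 := hfK hmem
    simp [this]
  -- each coefficient is 0 or 1
  have hidem : ∀ x₀ ∈ c.support, c x₀ * c x₀ = c x₀ := by
    intro x₀ hx₀
    obtain ⟨f, hfc, hf1, hf0⟩ := hsep x₀ hx₀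
    have := hmul f f hfc hfc
    have lhs : (∑ x ∈ c.support, c x * (f x * f x)) = c x₀ := by
      rw [Finset.sum_eq_single x₀]
      · simp [hf1]
      · intro y hy hne; simp [hf0 y hy hne]
      · intro h; exact absurd hx₀ h
    have rhs : (∑ x ∈ c.support, c x * f x) = c x₀ := by
      rw [Finset.sum_eq_single x₀]
      · simp [hf1]
      · intro y hy hne; simp [hf0 y hy hne]
      · intro h; exact absurd hx₀ h
    rw [lhs, rhs] at this
    linarith [this]
  -- products of distinct coefficients vanish
  have hdisj : ∀ x₀ ∈ c.support, ∀ x₁ ∈ c.support, x₀ ≠ x₁ → c x₀ * c x₁ = 0 := by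
    intro x₀ hx₀ x₁ hx₁ hne
    obtain ⟨f, hfc, hf1, hf0⟩ := hsep x₀ hx₀
    obtain ⟨g, hgc, hg1, hg0⟩ := hsep x₁ hx₁
    have := hmul f g hfc hgc
    have lhs : (∑ x ∈ c.support, c x * (f x * g x)) = 0 := by
      apply Finset.sum_eq_zero
      intro y hy
      rcases eq_or_ne y x₀ with rfl | h0
      · rw [hg0 y hy hne]; ring
      · rw [hf0 y hy h0]; ring
    have r1 : (∑ x ∈ c.support, c x * f x) = c x₀ := by
      rw [Finset.sum_eq_single x₀]
      · simp [hf1]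
      · intro y hy hne'; simp [hf0 y hy hne']
      · intro h; exact absurd hx₀ h
    have r2 : (∑ x ∈ c.support, c x * g x) = c x₁ := by
      rw [Finset.sum_eq_single x₁]
      · simp [hg1]
      · intro y hy hne'; simp [hg0 y hy hne']
      · intro h; exact absurd hx₁ h
    rw [lhs, r1, r2] at this
    exact this.symm
  -- the support is nonempty
  have hne : c.support.Nonempty := by
    rcases Finset.eq_empty_or_nonempty c.support with h | h
    · exfalso; rw [h] at hsum; simp at hsum
    · exact h
  obtain ⟨x₀, hx₀⟩ := hne
  -- each coefficient in the support is 1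
  have hcval : ∀ x ∈ c.support, c x = 1 := by
    intro x hx
    have hnz : c x ≠ 0 := Finsupp.mem_support_iff.mp hx
    have h1 := hidem x hx
    have h2 : c x * (c x - 1) = 0 := by ring_nf; linarith [h1]
    rcases mul_eq_zero.mp h2 with h | h
    · exact absurd h hnz
    · have : c x = 1 := by linarith [h]
      exact this
  -- the support is a singleton
  have hsingle : c.support = {x₀} := by
    apply Finset.eq_singleton_iff_unique_mem.mpr
    refine ⟨hx₀, fun y hy => ?_⟩
    by_contra hne'
    have := hdisj y hy x₀ hx₀ hne'
    rw [hcval y hy, hcval x₀ hx₀] at this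
    norm_num at this
  -- finally, v = i x₀
  have : v = i x₀ := by
    rw [← hc, Finsupp.sum, hsingle, Finset.sum_singleton, hcval x₀ hx₀, one_smul]
  exact ⟨x₀, this.symm⟩
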